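/- Let λ ≥ 2 be real, T ∈ (0,∞], and let v : [0,T) → ℝ be twice continuously differentiable with v(0) = 1, v'(0) = 1, satisfying for all r ∈ [0,T): v''(r) = −λ·[ (1+v'(r)^2)^{1/2}/(r^2+v(r)^2)^{λ/2} + (r·v'(r) − v(r))/(r^2+v(r)^2) ]·(1+v'(r)^2). Then v(r) ≥ 1 and v'(r) > 0 for all r ∈ [0,T). -/

import Mathlib

/-- (First claim in the proof of Proposition `prop41` of
Chen–Warren.)  Let `λ ≥ 2`, `T ∈ (0,∞]`, and let `v : [0,T) → ℝ` be twice
continuously differentiable with `v(0) = 1`, `v'(0) = 1`, satisfying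
`v'' = −λ [√(1+(v')²)/(r²+v²)^{λ/2} + (r v' − v)/(r²+v²)] (1+(v')²)` on `[0,T)`.
Then `v ≥ 1` and `v' > 0` on `[0,T)`. -/
theorem solution_stays_increasing
    (l : ℝ) (hl : 2 ≤ l) (T : EReal) (hT : 0 < T)
    (v v' v'' : ℝ → ℝ)
    (I : Set ℝ) (hI : I = {r : ℝ | 0 ≤ r ∧ (r : EReal) < T})
    (hd1 : ∀ r ∈ I, HasDerivWithinAt v (v' r) I r)
    (hd2 : ∀ r ∈ I, HasDerivWithinAt v' (v'' r) I r)
    (hc : ContinuousOn v'' I)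
    (h0 : v 0 = 1) (h0' : v' 0 = 1)
    (hode : ∀ r ∈ I, v'' r
      = -l * (Real.sqrt (1 + (v' r) ^ 2) / (r ^ 2 + (v r) ^ 2) ^ (l / 2)
            + (r * v' r - v r) / (r ^ 2 + (v r) ^ 2)) * (1 + (v' r) ^ 2)) :
    ∀ r ∈ I, 1 ≤ v r ∧ 0 < v' r := by
  have hdown : ∀ {x a : ℝ}, 0 ≤ x → x ≤ a → a ∈ I → x ∈ I := by
    intro x a hx hxa ha
    rw [hI] at ha ⊢
    exact ⟨hx, lt_of_le_of_lt (EReal.coe_le_coe_iff.2 hxa) ha.2⟩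
  have hcv : ContinuousOn v I := fun r hr => (hd1 r hr).continuousWithinAt
  have hcv' : ContinuousOn v' I := fun r hr => (hd2 r hr).continuousWithinAt
  -- key: v' positive on I
  have key : ∀ r ∈ I, 0 < v' r := by
    by_contra hcon
    push_neg at hcon
    obtain ⟨a, haI, ha⟩ := hcon
    set A := {r | r ∈ I ∧ v' r ≤ 0} with hA
    have hAne : A.Nonempty := ⟨a, haI, ha⟩
    have hAbdd : BddBelow A := ⟨0, fun x hx => by
      have h := hx.1; rw [hI] at h; exact h.1⟩
    set r₀ := sInf A with hr₀
    have hr₀cl : r₀ ∈ closure A := csInf_mem_closure hAne hAbdd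
    have hr₀0 : 0 ≤ r₀ := le_csInf hAne fun x hx => by
      have h := hx.1; rw [hI] at h; exact h.1
    have hr₀le : r₀ ≤ a := csInf_le hAbdd ⟨haI, ha⟩
    have hr₀I : r₀ ∈ I := hdown hr₀0 hr₀le haI
    have hNB : (nhdsWithin r₀ A).NeBot := mem_closure_iff_nhdsWithin_neBot.1 hr₀cl
    have hv'le : v' r₀ ≤ 0 := by
      have htend : Filter.Tendsto v' (nhdsWithin r₀ A) (nhds (v' r₀)) :=
        (hcv' r₀ hr₀I).mono fun x hx => hx.1
      exact le_of_tendsto htend (eventually_nhdsWithin_of_forall fun x hx => hx.2)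
    have hpos : ∀ r, 0 ≤ r → r < r₀ → 0 < v' r := by
      intro r h1 h2
      by_contra hc2
      push_neg at hc2
      have hrI : r ∈ I := hdown h1 (h2.le.trans hr₀le) haI
      exact absurd (csInf_le hAbdd ⟨hrI, hc2⟩) (not_le.2 h2)
    have hr₀pos : 0 < r₀ := by
      rcases hr₀0.lt_or_eq with h | h
      · exact h
      · exfalso
        rw [← h, h0'] at hv'le
        linarith
    have hIco_sub : Set.Ico 0 r₀ ⊆ I := fun x hx => hdown hx.1 hx.2.le hr₀I
    have hIcc_sub : Set.Icc 0 r₀ ⊆ I := fun x hx => hdown hx.1 hx.2 hr₀I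
    have hNB2 : (nhdsWithin r₀ (Set.Ico 0 r₀)).NeBot := by
      apply mem_closure_iff_nhdsWithin_neBot.1
      rw [closure_Ico hr₀pos.ne]
      exact Set.right_mem_Icc.2 hr₀0
    have hv'0 : v' r₀ = 0 := by
      refine le_antisymm hv'le ?_
      have htend : Filter.Tendsto v' (nhdsWithin r₀ (Set.Ico 0 r₀)) (nhds (v' r₀)) :=
        (hcv' r₀ hr₀I).mono hIco_sub
      exact ge_of_tendsto htend
        (eventually_nhdsWithin_of_forall fun x hx => (hpos x hx.1 hx.2).le)
    -- v r₀ > 1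
    have hsm : StrictMonoOn v (Set.Icc 0 r₀) := by
      apply strictMonoOn_of_deriv_pos (convex_Icc _ _) (hcv.mono hIcc_sub)
      intro x hx
      rw [interior_Icc] at hx
      have hxI : I ∈ nhds x := Filter.mem_of_superset (Icc_mem_nhds hx.1 hx.2) hIcc_sub
      have hda : HasDerivAt v (v' x) x := (hd1 x (hIcc_sub ⟨hx.1.le, hx.2.le⟩)).hasDerivAt hxI
      rw [hda.deriv]
      exact hpos x hx.1.le hx.2
    have hv1 : 1 < v r₀ := by
      have := hsm (Set.left_mem_Icc.2 hr₀0) (Set.right_mem_Icc.2 hr₀0) hr₀pos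
      rwa [h0] at this
    -- ODE value at r₀ is positive
    have hode0 := hode r₀ hr₀I
    rw [hv'0] at hode0
    have hs1 : 1 < r₀ ^ 2 + (v r₀) ^ 2 := by nlinarith
    have hspos : (0:ℝ) < r₀ ^ 2 + (v r₀) ^ 2 := by linarith
    set s := r₀ ^ 2 + (v r₀) ^ 2 with hsdef
    have hrpow : s ≤ s ^ (l / 2) := by
      have := Real.rpow_le_rpow_of_exponent_le hs1.le (by linarith : (1:ℝ) ≤ l / 2)
      rwa [Real.rpow_one] at this
    have hrpow_pos : 0 < s ^ (l / 2) := Real.rpow_pos_of_pos hspos _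
    have hineq : Real.sqrt (1 + 0 ^ 2) / s ^ (l / 2) + (r₀ * 0 - v r₀) / s < 0 := by
      have h1 : Real.sqrt (1 + (0:ℝ) ^ 2) = 1 := by norm_num
      rw [h1]
      have h2 : (1:ℝ) / s ^ (l / 2) ≤ 1 / s := by
        apply div_le_div_of_nonneg_left (by norm_num) hspos hrpow
      have h3 : (1:ℝ) / s < v r₀ / s := (div_lt_div_iff_of_pos_right hspos).2 hv1
      have : r₀ * 0 - v r₀ = -(v r₀) := by ring
      rw [this]
      have : -(v r₀) / s = -(v r₀ / s) := by ring
      rw [this]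
      linarith
    have hvpp : 0 < v'' r₀ := by
      rw [hode0]
      have : (1:ℝ) + 0 ^ 2 = 1 := by norm_num
      rw [this, mul_one]
      have hlpos : 0 < l := by linarith
      nlinarith [hineq]
    -- but v'' r₀ ≤ 0 via slopes from the left
    have hvpn : v'' r₀ ≤ 0 := by
      have hder : HasDerivWithinAt v' (v'' r₀) (Set.Icc 0 r₀) r₀ :=
        (hd2 r₀ hr₀I).mono hIcc_sub
      rw [hasDerivWithinAt_iff_tendsto_slope] at hder
      rw [Set.Icc_sdiff_right] at hder
      refine le_of_tendsto hder (eventually_nhdsWithin_of_forall fun x hx => ?_)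
      have hx1 : 0 < v' x := hpos x hx.1 hx.2
      have hx2 : x - r₀ < 0 := by linarith [hx.2]
      rw [slope_def_field]
      have : (v' x - v' r₀) / (x - r₀) < 0 := by
        apply div_neg_of_pos_of_neg _ hx2
        rw [hv'0]; linarith
      rw [div_eq_inv_mul] at this ⊢
      linarith
    linarith
  -- conclude v ≥ 1
  intro r hrI
  refine ⟨?_, key r hrI⟩
  rcases eq_or_lt_of_le (by rw [hI] at hrI; exact hrI.1 : (0:ℝ) ≤ r) with h | h
  · rw [← h, h0]
  · have hIcc_sub : Set.Icc 0 r ⊆ I := fun x hx => hdown hx.1 hx.2 hrI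
    have hsm : StrictMonoOn v (Set.Icc 0 r) := by
      apply strictMonoOn_of_deriv_pos (convex_Icc _ _) (hcv.mono hIcc_sub)
      intro x hx
      rw [interior_Icc] at hx
      have hxI : I ∈ nhds x := Filter.mem_of_superset (Icc_mem_nhds hx.1 hx.2) hIcc_sub
      have hda : HasDerivAt v (v' x) x := (hd1 x (hIcc_sub ⟨hx.1.le, hx.2.le⟩)).hasDerivAt hxI
      rw [hda.deriv]
      exact key x (hIcc_sub ⟨hx.1.le, hx.2.le⟩)
    have := hsm (Set.left_mem_Icc.2 h.le) (Set.right_mem_Icc.2 h.le) h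
    rw [h0] at this
    linarith
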